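/- Let d ≥ 1, s, and j ≥ 0 be integers with d ≤ s ≤ 3d − 2. Define the sequence aₙ = log( (2ⁿ(2d + j) + 1 − 2d)·(2ⁿ(2d + j) + 1 − d) / (2ⁿ(2d + j) + 1 + s − 2d)² ) for n ∈ ℕ (all the factors appearing are positive). Then the sequence (aₙ) is completely alternating. (The quantity inside the logarithm is the square wₙ² of the n-th weight of the shift appearing on the orbit of founder j in the direct sum decomposition of B*_{z^t z̄^s}, with t = s − d, on the Bergman space; a shift whose squared weights form a log completely alternating sequence is moment infinitely divisible (MID). Hence for s ≤ 3d − 2 each shift in the decomposition, and therefore B*_{z^t z̄^s}, is MID.) -/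

import Mathlib

/-- A sequence `a : ℕ → ℝ` is *completely alternating* if for every `k ≥ 1` and every `m`,
`∑_{i=0}^{k} (−1)ⁱ·binom(k,i)·a_{m+i} ≤ 0`. -/
def CompletelyAlternating (a : ℕ → ℝ) : Prop :=
  ∀ k : ℕ, 1 ≤ k → ∀ m : ℕ,
    ∑ i ∈ Finset.range (k + 1), (-1 : ℝ) ^ i * (k.choose i) * a (m + i) ≤ 0

open Finset

/-- binomial identity for the alternating sums -/
lemma sum_binom (k m : ℕ) (b r : ℝ) :
    ∑ i ∈ Finset.range (k + 1), (-1 : ℝ) ^ i * ((k.choose i : ℝ)) * (b * r ^ (m + i)) =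
      b * r ^ m * (1 - r) ^ k := by
  rw [show (1 - r : ℝ) = -r + 1 by ring, add_pow, Finset.mul_sum]
  refine Finset.sum_congr rfl fun i _ => ?_
  rw [pow_add, neg_pow, one_pow]
  ring

lemma aux (c A B E : ℝ) (hca : A < c) (hA0 : 0 ≤ A) (hBA : B ≤ A) (hB0 : 0 ≤ B)
    (hEB : |E| ≤ B) :
    CompletelyAlternating (fun n =>
      Real.log ((c * 2 ^ n - A) * (c * 2 ^ n - B) / (c * 2 ^ n - E) ^ 2)) := by
  have hc : 0 < c := lt_of_le_of_lt hA0 hca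
  have hEA : |E| ≤ A := hEB.trans hBA
  set β : ℕ → ℝ := fun p =>
    (2 * E ^ (p + 1) - A ^ (p + 1) - B ^ (p + 1)) / (((p : ℝ) + 1) * c ^ (p + 1)) with hβ
  have key : ∀ n : ℕ, HasSum (fun p : ℕ => β p * (((2 : ℝ) ^ (p + 1))⁻¹) ^ n)
      (Real.log ((c * 2 ^ n - A) * (c * 2 ^ n - B) / (c * 2 ^ n - E) ^ 2)) := by
    intro n
    have h2n : (1 : ℝ) ≤ 2 ^ n := one_le_pow₀ (by norm_num)
    have hy0 : 0 < c * 2 ^ n := by positivity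
    have hAy : A < c * 2 ^ n := lt_of_lt_of_le hca (le_mul_of_one_le_right hc.le h2n)
    have hBy : B < c * 2 ^ n := lt_of_le_of_lt hBA hAy
    have hEy : |E| < c * 2 ^ n := lt_of_le_of_lt hEA hAy
    have habs : ∀ x : ℝ, |x| ≤ A → |x / (c * 2 ^ n)| < 1 := by
      intro x hx
      rw [abs_div, abs_of_pos hy0, div_lt_one hy0]
      exact lt_of_le_of_lt hx hAy
    have h1 := Real.hasSum_pow_div_log_of_abs_lt_one (habs A (le_of_eq (abs_of_nonneg hA0)))
    have h2 := Real.hasSum_pow_div_log_of_abs_lt_one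
      (habs B (by rw [abs_of_nonneg hB0]; exact hBA))
    have h3 := Real.hasSum_pow_div_log_of_abs_lt_one (habs E hEA)
    have H := ((h1.add h2).sub (h3.mul_left 2)).neg
    have hfun : (fun p : ℕ => -((A / (c * 2 ^ n)) ^ (p + 1) / ((p : ℝ) + 1) +
        (B / (c * 2 ^ n)) ^ (p + 1) / ((p : ℝ) + 1) -
        2 * ((E / (c * 2 ^ n)) ^ (p + 1) / ((p : ℝ) + 1)))) =
        fun p : ℕ => β p * (((2 : ℝ) ^ (p + 1))⁻¹) ^ n := by
      funext p
      have hyq : (c * 2 ^ n) ^ (p + 1) = c ^ (p + 1) * ((2 : ℝ) ^ (p + 1)) ^ n := by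
        rw [mul_pow, ← pow_mul, ← pow_mul, Nat.mul_comm]
      have hp1 : ((p : ℝ) + 1) ≠ 0 := by positivity
      have hc1 : c ^ (p + 1) ≠ 0 := by positivity
      have h21 : ((2 : ℝ) ^ (p + 1)) ^ n ≠ 0 := by positivity
      rw [hβ]
      simp only [div_pow, hyq, inv_pow]
      field_simp
      ring
    have hval : -(-Real.log (1 - A / (c * 2 ^ n)) + -Real.log (1 - B / (c * 2 ^ n)) -
        2 * -Real.log (1 - E / (c * 2 ^ n))) =
        Real.log ((c * 2 ^ n - A) * (c * 2 ^ n - B) / (c * 2 ^ n - E) ^ 2) := by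
      have e : ∀ x : ℝ, 1 - x / (c * 2 ^ n) = (c * 2 ^ n - x) / (c * 2 ^ n) := by
        intro x; field_simp
      have pA : (0 : ℝ) < c * 2 ^ n - A := by linarith
      have pB : (0 : ℝ) < c * 2 ^ n - B := by linarith
      have pE : (0 : ℝ) < c * 2 ^ n - E := by
        have := (abs_lt.1 hEy).2; linarith
      rw [e, e, e, Real.log_div pA.ne' hy0.ne', Real.log_div pB.ne' hy0.ne',
        Real.log_div pE.ne' hy0.ne', Real.log_div (by positivity) (by positivity),
        Real.log_mul pA.ne' pB.ne', Real.log_pow]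
      ring
    rw [hfun, hval] at H
    exact H
  intro k hk m
  have H : HasSum
      (fun p : ℕ => ∑ i ∈ Finset.range (k + 1),
        (-1 : ℝ) ^ i * ((k.choose i : ℝ)) * (β p * (((2 : ℝ) ^ (p + 1))⁻¹) ^ (m + i)))
      (∑ i ∈ Finset.range (k + 1), (-1 : ℝ) ^ i * ((k.choose i : ℝ)) *
        Real.log ((c * 2 ^ (m + i) - A) * (c * 2 ^ (m + i) - B) / (c * 2 ^ (m + i) - E) ^ 2)) :=
    hasSum_sum fun i _ => (key (m + i)).mul_left _
  simp only [sum_binom] at H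
  refine hasSum_le (fun p => ?_) H hasSum_zero
  have hr0 : (0 : ℝ) ≤ ((2 : ℝ) ^ (p + 1))⁻¹ := by positivity
  have hr1 : ((2 : ℝ) ^ (p + 1))⁻¹ ≤ 1 := by
    rw [inv_le_one_iff₀]; right; exact one_le_pow₀ (by norm_num)
  have hβp : β p ≤ 0 := by
    apply div_nonpos_of_nonpos_of_nonneg
    · have hE' : E ^ (p + 1) ≤ B ^ (p + 1) := by
        calc E ^ (p + 1) ≤ |E ^ (p + 1)| := le_abs_self _
          _ = |E| ^ (p + 1) := abs_pow E (p + 1)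
          _ ≤ B ^ (p + 1) := pow_le_pow_left₀ (abs_nonneg E) hEB _
      have hB' : B ^ (p + 1) ≤ A ^ (p + 1) := pow_le_pow_left₀ hB0 hBA _
      linarith
    · positivity
  have : (0 : ℝ) ≤ (((2 : ℝ) ^ (p + 1))⁻¹) ^ m * (1 - ((2 : ℝ) ^ (p + 1))⁻¹) ^ k := by
    apply mul_nonneg (by positivity)
    exact pow_nonneg (by linarith) k
  calc β p * (((2 : ℝ) ^ (p + 1))⁻¹) ^ m * (1 - ((2 : ℝ) ^ (p + 1))⁻¹) ^ k
      = β p * ((((2 : ℝ) ^ (p + 1))⁻¹) ^ m * (1 - ((2 : ℝ) ^ (p + 1))⁻¹) ^ k) := by ring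
    _ ≤ 0 := mul_nonpos_of_nonpos_of_nonneg hβp this


/-- Let `d ≥ 1`, `d ≤ s ≤ 3d − 2`, `j ≥ 0`.  Then the sequence
`aₙ = log((2ⁿ(2d+j)+1−2d)(2ⁿ(2d+j)+1−d)/(2ⁿ(2d+j)+1+s−2d)²)` is completely
alternating.  The quantity inside the logarithm is the squared `n`-th weight of the shift
on the orbit of founder `j` in the decomposition of `B*_{zᵗ z̄ˢ}` (`t = s − d`) on the
Bergman space; hence for `s ≤ 3d − 2` each such shift, and therefore `B*_{zᵗ z̄ˢ}`, is
moment infinitely divisible. -/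
theorem log_weights_completely_alternating (d s j : ℤ) (hd : 1 ≤ d) (hds : d ≤ s)
    (hs : s ≤ 3 * d - 2) (hj : 0 ≤ j) :
    CompletelyAlternating (fun n =>
      Real.log (((2 : ℝ) ^ n * (2 * (d : ℝ) + (j : ℝ)) + 1 - 2 * (d : ℝ)) *
          ((2 : ℝ) ^ n * (2 * (d : ℝ) + (j : ℝ)) + 1 - (d : ℝ)) /
        ((2 : ℝ) ^ n * (2 * (d : ℝ) + (j : ℝ)) + 1 + (s : ℝ) - 2 * (d : ℝ)) ^ 2)) := by
  have hd' : (1 : ℝ) ≤ (d : ℝ) := by exact_mod_cast hd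
  have hds' : (d : ℝ) ≤ (s : ℝ) := by exact_mod_cast hds
  have hs' : (s : ℝ) ≤ 3 * (d : ℝ) - 2 := by
    have : ((s : ℝ)) ≤ ((3 * d - 2 : ℤ) : ℝ) := by exact_mod_cast hs
    push_cast at this; linarith
  have hj' : (0 : ℝ) ≤ (j : ℝ) := by exact_mod_cast hj
  have h := aux (2 * (d : ℝ) + j) (2 * (d : ℝ) - 1) ((d : ℝ) - 1) (2 * (d : ℝ) - 1 - s)
    (by linarith) (by linarith) (by linarith) (by linarith)
    (abs_le.mpr ⟨by linarith, by linarith⟩)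
  have heq : (fun n : ℕ =>
      Real.log (((2 : ℝ) ^ n * (2 * (d : ℝ) + (j : ℝ)) + 1 - 2 * (d : ℝ)) *
          ((2 : ℝ) ^ n * (2 * (d : ℝ) + (j : ℝ)) + 1 - (d : ℝ)) /
        ((2 : ℝ) ^ n * (2 * (d : ℝ) + (j : ℝ)) + 1 + (s : ℝ) - 2 * (d : ℝ)) ^ 2)) =
      (fun n : ℕ =>
      Real.log (((2 * (d : ℝ) + j) * 2 ^ n - (2 * (d : ℝ) - 1)) *
          ((2 * (d : ℝ) + j) * 2 ^ n - ((d : ℝ) - 1)) /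
        ((2 * (d : ℝ) + j) * 2 ^ n - (2 * (d : ℝ) - 1 - s)) ^ 2)) := by
    funext n; congr 1; ring
  rw [heq]
  exact h
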